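/- Fix L > 0, c > 4/L^2 and a ∈ (0, 1), and for each N ≥ 2 let δ_1^{(N)}, ..., δ_N^{(N)} be the gaps of the unique equilibrium configuration on [-L, 0] for constant force F = cN. Then N · δ_{⌈aN⌉}^{(N)} → 1/√((1-a)c) as N → ∞; in particular the limiting particle density is not uniform. -/

import Mathlib

/-- An equilibrium (fixed-point) configuration of `N+1` charges
`-L ≤ x N < ... < x 1 < x 0 = 0` on `[-L, 0]` under constant external force `F`:
with gaps `δ k = x (k-1) - x k` and `f k = (δ k)⁻²`, the force balance
`f (k+1) + F = f k` holds for `k = 1, ..., N-1`, and at the left end either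
`x N = -L` with `f N ≥ F`, or `x N > -L` with `f N = F`. Such a configuration
exists and is unique. -/
def IsEquilibConst (N : ℕ) (L F : ℝ) (x : ℕ → ℝ) : Prop :=
  x 0 = 0 ∧ (∀ k < N, x (k + 1) < x k) ∧ -L ≤ x N ∧
  (∀ k, 1 ≤ k → k < N →
    ((x k - x (k + 1)) ^ 2)⁻¹ + F = ((x (k - 1) - x k) ^ 2)⁻¹) ∧
  ((x N = -L ∧ F ≤ ((x (N - 1) - x N) ^ 2)⁻¹) ∨
   (-L < x N ∧ ((x (N - 1) - x N) ^ 2)⁻¹ = F))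

lemma sum_inv_sqrt_le (n : ℕ) :
    ∑ j ∈ Finset.range n, (Real.sqrt ((j : ℝ) + 1))⁻¹ ≤ 2 * Real.sqrt n := by
  induction n with
  | zero => simp
  | succ n ih =>
    rw [Finset.sum_range_succ]
    have hs : Real.sqrt n ^ 2 = (n : ℝ) := Real.sq_sqrt (by positivity)
    have ht : Real.sqrt ((n : ℝ) + 1) ^ 2 = (n : ℝ) + 1 := Real.sq_sqrt (by positivity)
    have ht0 : 0 < Real.sqrt ((n : ℝ) + 1) := Real.sqrt_pos.mpr (by positivity)
    have key : (Real.sqrt ((n : ℝ) + 1))⁻¹ ≤ 2 * Real.sqrt ((n : ℝ) + 1) - 2 * Real.sqrt n := by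
      rw [inv_eq_one_div, div_le_iff₀ ht0]
      nlinarith [sq_nonneg (Real.sqrt ((n : ℝ) + 1) - Real.sqrt n), Real.sqrt_nonneg (n : ℝ)]
    have : ((n + 1 : ℕ) : ℝ) = (n : ℝ) + 1 := by push_cast; ring
    rw [this]
    linarith

lemma gap_formula (L c : ℝ) (hL : 0 < L) (hc : 4 / L ^ 2 < c) (N : ℕ) (hN : 2 ≤ N)
    (x : ℕ → ℝ) (hx : IsEquilibConst N L (c * N) x) :
    ∀ k : ℕ, 1 ≤ k → k ≤ N →
      x (k - 1) - x k = (Real.sqrt (((N : ℝ) - k + 1) * (c * N)))⁻¹ := by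
  have hc0 : 0 < c := lt_trans (by positivity) hc
  obtain ⟨h0, hmono, hend, hbal, hlast⟩ := hx
  have hNpos : (0 : ℝ) < N := by
    have : (2 : ℝ) ≤ N := by exact_mod_cast hN
    linarith
  have hF : 0 < c * N := by positivity
  have hδpos : ∀ k : ℕ, 1 ≤ k → k ≤ N → 0 < x (k - 1) - x k := by
    intro k hk1 hkN
    have h := hmono (k - 1) (by omega)
    have e : k - 1 + 1 = k := by omega
    rw [e] at h
    linarith
  have chain : ∀ j : ℕ, j ≤ N - 1 →
      ((x (N - j - 1) - x (N - j)) ^ 2)⁻¹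
        = ((x (N - 1) - x N) ^ 2)⁻¹ + j * (c * N) := by
    intro j
    induction j with
    | zero => intro _; simp
    | succ j ih =>
      intro hj
      have hj' : j ≤ N - 1 := by omega
      have hbal' := hbal (N - j - 1) (by omega) (by omega)
      have e1 : N - j - 1 + 1 = N - j := by omega
      rw [e1] at hbal'
      have g1 : N - (j + 1) = N - j - 1 := by omega
      have g2 : N - (j + 1) - 1 = N - j - 1 - 1 := by omega
      rw [g2, g1]
      have := ih hj'
      push_cast
      linarith [hbal', this]
  have sumδ : ∑ i ∈ Finset.range N, (x i - x (i + 1)) = x 0 - x N :=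
    Finset.sum_range_sub' x N
  have hfN : ((x (N - 1) - x N) ^ 2)⁻¹ = c * N := by
    rcases hlast with ⟨hxN, hge⟩ | ⟨_, heq⟩
    · exfalso
      have hLsum : ∑ i ∈ Finset.range N, (x i - x (i + 1)) = L := by
        rw [sumδ, h0, hxN]; ring
      have hbound : ∀ i ∈ Finset.range N,
          x i - x (i + 1) ≤ (Real.sqrt (((N - i : ℕ) : ℝ) * (c * N)))⁻¹ := by
        intro i hi
        rw [Finset.mem_range] at hi
        have hk1 : 1 ≤ i + 1 := by omega
        have hkN : i + 1 ≤ N := by omega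
        have hj := chain (N - (i + 1)) (by omega)
        have e1 : N - (N - (i + 1)) = i + 1 := by omega
        have e2 : N - (N - (i + 1)) - 1 = i := by omega
        rw [e2, e1] at hj
        have hδ : 0 < x i - x (i + 1) := by
          have := hδpos (i + 1) hk1 hkN
          simpa using this
        have hmval : (((N - i : ℕ) : ℝ)) * (c * N) ≤ ((x i - x (i + 1)) ^ 2)⁻¹ := by
          rw [hj]
          have hcast : ((N - (i + 1) : ℕ) : ℝ) = (N : ℝ) - i - 1 := by
            push_cast [Nat.cast_sub hkN]; ring
          have hcast2 : ((N - i : ℕ) : ℝ) = (N : ℝ) - i := by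
            push_cast [Nat.cast_sub (le_of_lt hi)]; ring
          rw [hcast, hcast2]
          nlinarith [hge, hF]
        have hmpos : 0 < (((N - i : ℕ) : ℝ)) * (c * N) := by
          have : (1 : ℝ) ≤ ((N - i : ℕ) : ℝ) := by
            have : 1 ≤ N - i := by omega
            exact_mod_cast this
          nlinarith [hF]
        have hsq : (x i - x (i + 1)) ^ 2 ≤ ((((N - i : ℕ) : ℝ)) * (c * N))⁻¹ := by
          rw [← inv_inv ((x i - x (i + 1)) ^ 2)]
          exact inv_anti₀ hmpos hmval
        calc x i - x (i + 1) = Real.sqrt ((x i - x (i + 1)) ^ 2) :=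
              (Real.sqrt_sq hδ.le).symm
          _ ≤ Real.sqrt (((((N - i : ℕ) : ℝ)) * (c * N))⁻¹) := Real.sqrt_le_sqrt hsq
          _ = (Real.sqrt ((((N - i : ℕ) : ℝ)) * (c * N)))⁻¹ := Real.sqrt_inv _
      have hsum1 : L ≤ ∑ i ∈ Finset.range N, (Real.sqrt (((N - i : ℕ) : ℝ) * (c * N)))⁻¹ := by
        rw [← hLsum]; exact Finset.sum_le_sum hbound
      have reidx : ∑ i ∈ Finset.range N, (Real.sqrt (((N - i : ℕ) : ℝ) * (c * N)))⁻¹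
          = ∑ j ∈ Finset.range N, (Real.sqrt (((j : ℝ) + 1) * (c * N)))⁻¹ := by
        rw [← Finset.sum_range_reflect (fun j => (Real.sqrt (((j : ℝ) + 1) * (c * N)))⁻¹) N]
        apply Finset.sum_congr rfl
        intro i hi
        rw [Finset.mem_range] at hi
        have : ((N - 1 - i : ℕ) : ℝ) + 1 = ((N - i : ℕ) : ℝ) := by
          have e : (N - 1 - i) + 1 = N - i := by omega
          exact_mod_cast congrArg (Nat.cast : ℕ → ℝ) e
        rw [this]
      have hfac : ∀ j ∈ Finset.range N,
          (Real.sqrt (((j : ℝ) + 1) * (c * N)))⁻¹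
            = (Real.sqrt ((j : ℝ) + 1))⁻¹ * (Real.sqrt (c * N))⁻¹ := by
        intro j _
        rw [Real.sqrt_mul (by positivity), mul_inv]
      have hsum2 : ∑ j ∈ Finset.range N, (Real.sqrt (((j : ℝ) + 1) * (c * N)))⁻¹
          ≤ 2 * Real.sqrt N * (Real.sqrt (c * N))⁻¹ := by
        rw [Finset.sum_congr rfl hfac, ← Finset.sum_mul]
        have h1 := sum_inv_sqrt_le N
        have h2 : (0 : ℝ) ≤ (Real.sqrt (c * N))⁻¹ := by positivity
        exact mul_le_mul_of_nonneg_right h1 h2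
      have hsc : 0 < Real.sqrt c := Real.sqrt_pos.mpr hc0
      have hsN : 0 < Real.sqrt N := Real.sqrt_pos.mpr hNpos
      have hval : 2 * Real.sqrt N * (Real.sqrt (c * N))⁻¹ = 2 / Real.sqrt c := by
        rw [Real.sqrt_mul hc0.le]
        field_simp
      have hfinal : 2 / Real.sqrt c < L := by
        rw [div_lt_iff₀ hsc]
        have h4 : (4 : ℝ) < L ^ 2 * c := by
          rw [div_lt_iff₀ (by positivity)] at hc
          linarith
        nlinarith [Real.sq_sqrt hc0.le, hL, hsc, mul_pos hL hsc]
      rw [reidx] at hsum1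
      linarith [hsum1, hsum2, hfinal]
    · exact heq
  intro k hk1 hkN
  have hj := chain (N - k) (by omega)
  have e1 : N - (N - k) = k := by omega
  have e2 : N - (N - k) - 1 = k - 1 := by omega
  rw [e2, e1, hfN] at hj
  have hm : ((x (k - 1) - x k) ^ 2)⁻¹ = ((N : ℝ) - k + 1) * (c * N) := by
    rw [hj]
    push_cast [Nat.cast_sub hkN]
    ring
  have hδ := hδpos k hk1 hkN
  have hsq : (x (k - 1) - x k) ^ 2 = (((N : ℝ) - k + 1) * (c * N))⁻¹ := by
    rw [← hm, inv_inv]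
  calc x (k - 1) - x k = Real.sqrt ((x (k - 1) - x k) ^ 2) := (Real.sqrt_sq hδ.le).symm
    _ = Real.sqrt ((((N : ℝ) - k + 1) * (c * N))⁻¹) := by rw [hsq]
    _ = (Real.sqrt (((N : ℝ) - k + 1) * (c * N)))⁻¹ := Real.sqrt_inv _

/-- For `c > 4/L²`, force `F = c N` and `a ∈ (0,1)`, the
gap with index `⌈a N⌉` of the equilibrium configuration satisfies
`N · δ ⌈a N⌉ → 1/√((1-a) c)`; in particular the limiting density is not
uniform. -/
theorem gap_asymptotics_supercritical_linear
    (L c a : ℝ) (hL : 0 < L) (hc : 4 / L ^ 2 < c) (ha : a ∈ Set.Ioo (0 : ℝ) 1)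
    (x : ℕ → ℕ → ℝ)
    (hx : ∀ N, 2 ≤ N → IsEquilibConst N L (c * (N : ℝ)) (x N)) :
    Filter.Tendsto
      (fun N : ℕ => (N : ℝ) * (x N (⌈a * (N : ℝ)⌉₊ - 1) - x N ⌈a * (N : ℝ)⌉₊))
      Filter.atTop (nhds (1 / Real.sqrt ((1 - a) * c))) := by
  have hc0 : 0 < c := lt_trans (by positivity) hc
  obtain ⟨ha0, ha1⟩ := ha
  -- the ratio (N - ⌈aN⌉ + 1)/N tends to 1 - a
  have hg : Filter.Tendsto (fun N : ℕ => ((N : ℝ) - ⌈a * (N : ℝ)⌉₊ + 1) / N)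
      Filter.atTop (nhds (1 - a)) := by
    have hupper : Filter.Tendsto (fun N : ℕ => 1 - a + 1 / (N : ℝ))
        Filter.atTop (nhds (1 - a)) := by
      have : Filter.Tendsto (fun n : ℕ => 1 / (n : ℝ)) Filter.atTop (nhds 0) :=
        tendsto_one_div_atTop_nhds_zero_nat
      simpa using (tendsto_const_nhds.add this)
    apply tendsto_of_tendsto_of_tendsto_of_le_of_le' tendsto_const_nhds hupper
    · filter_upwards [Filter.eventually_ge_atTop 1] with N hN
      have hN0 : (0 : ℝ) < N := by
        have : (1 : ℝ) ≤ N := by exact_mod_cast hN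
        linarith
      rw [le_div_iff₀ hN0]
      have hceil : (⌈a * (N : ℝ)⌉₊ : ℝ) < a * N + 1 :=
        Nat.ceil_lt_add_one (by positivity)
      nlinarith
    · filter_upwards [Filter.eventually_ge_atTop 1] with N hN
      have hN0 : (0 : ℝ) < N := by
        have : (1 : ℝ) ≤ N := by exact_mod_cast hN
        linarith
      rw [div_le_iff₀ hN0]
      have hceil : a * (N : ℝ) ≤ (⌈a * (N : ℝ)⌉₊ : ℝ) := Nat.le_ceil _
      have hexp : (1 - a + 1 / (N : ℝ)) * N = N - a * N + 1 := by
        field_simp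
      rw [hexp]
      linarith
  have hpos : 0 < (1 - a) * c := by nlinarith
  have hlim : Filter.Tendsto
      (fun N : ℕ => (Real.sqrt ((((N : ℝ) - ⌈a * (N : ℝ)⌉₊ + 1) / N) * c))⁻¹)
      Filter.atTop (nhds (1 / Real.sqrt ((1 - a) * c))) := by
    have h1 := (hg.mul_const c).sqrt
    have h2 := h1.inv₀ (ne_of_gt (Real.sqrt_pos.mpr hpos))
    simpa [one_div] using h2
  refine hlim.congr' ?_
  filter_upwards [Filter.eventually_ge_atTop 2] with N hN
  have hNpos : (0 : ℝ) < N := by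
    have : (2 : ℝ) ≤ N := by exact_mod_cast hN
    linarith
  set k := ⌈a * (N : ℝ)⌉₊ with hk
  have hk1 : 1 ≤ k := Nat.ceil_pos.mpr (by positivity)
  have hkN : k ≤ N := Nat.ceil_le.mpr (by nlinarith)
  have hgap := gap_formula L c hL hc N hN (x N) (hx N hN) k hk1 hkN
  rw [hgap]
  have hm1 : (1 : ℝ) ≤ (N : ℝ) - k + 1 := by
    have : (k : ℝ) ≤ N := by exact_mod_cast hkN
    linarith
  have hdiv : (((N : ℝ) - k + 1) / N) * c = (((N : ℝ) - k + 1) * (c * N)) / (N ^ 2) := by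
    field_simp
  rw [hdiv, Real.sqrt_div (by nlinarith [mul_pos hc0 hNpos, hm1]), Real.sqrt_sq hNpos.le, inv_div,
    div_eq_mul_inv]
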